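/- Let λ > 0, c' ∈ ℝⁿ, c ∈ ℝ, h(x) = λ|x|² + ⟨c',x⟩ + c > 0. Then F(x,y) = sqrt(4λ h(x)|y|² - 4λ²⟨x,y⟩² - 4λ⟨c',y⟩⟨x,y⟩ - ⟨c',y⟩²)/(2h(x)) satisfies Hamel's equations y^j ∂²F/(∂y^k∂x^j) = ∂F/∂x^k on the open set where the radicand is positive, hence is projectively flat, with projective factor P = -(2λ⟨x,y⟩ + ⟨c',y⟩)/(2h(x)). -/

import Mathlib

open Finset

/-- Partial derivative of `f` with respect to the `i`-th coordinate at `x`. -/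
noncomputable def pd {n : ℕ} (i : Fin n) (f : (Fin n → ℝ) → ℝ) (x : Fin n → ℝ) : ℝ :=
  deriv (fun t => f (Function.update x i t)) (x i)

/-- Partial derivative with respect to the `i`-th `x`-coordinate. -/
noncomputable def pdx {n : ℕ} (i : Fin n) (f : (Fin n → ℝ) → (Fin n → ℝ) → ℝ)
    (x y : Fin n → ℝ) : ℝ :=
  deriv (fun t => f (Function.update x i t) y) (x i)

/-- Partial derivative with respect to the `i`-th `y`-coordinate. -/
noncomputable def pdy {n : ℕ} (i : Fin n) (f : (Fin n → ℝ) → (Fin n → ℝ) → ℝ)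
    (x y : Fin n → ℝ) : ℝ :=
  deriv (fun t => f x (Function.update y i t)) (y i)

def s15Y {n : ℕ} (y : Fin n → ℝ) : ℝ := ∑ i, (y i) ^ 2
def s15ip {n : ℕ} (x y : Fin n → ℝ) : ℝ := ∑ i, x i * y i
def s15c {n : ℕ} (c' y : Fin n → ℝ) : ℝ := ∑ k, c' k * y k
def s15h {n : ℕ} (lam : ℝ) (c' : Fin n → ℝ) (c : ℝ) (x : Fin n → ℝ) : ℝ :=
  lam * s15Y x + s15c c' x + c
def s15Q {n : ℕ} (lam : ℝ) (c' : Fin n → ℝ) (x y : Fin n → ℝ) : ℝ :=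
  2 * lam * s15ip x y + s15c c' y
def s15R {n : ℕ} (lam : ℝ) (c' : Fin n → ℝ) (c : ℝ) (x y : Fin n → ℝ) : ℝ :=
  4 * lam * s15h lam c' c x * s15Y y - (s15Q lam c' x y) ^ 2
def s15H {n : ℕ} (lam : ℝ) (c' : Fin n → ℝ) (x : Fin n → ℝ) (j : Fin n) : ℝ :=
  2 * lam * x j + c' j

lemma s15sum_upd {n : ℕ} (x : Fin n → ℝ) (j : Fin n) (f : Fin n → ℝ → ℝ) (t : ℝ) :
    (∑ i, f i (Function.update x j t i)) = f j t + ∑ i ∈ Finset.univ.erase j, f i (x i) := by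
  rw [← Finset.add_sum_erase _ _ (Finset.mem_univ j)]
  simp only [Function.update_self]
  congr 1
  exact Finset.sum_congr rfl fun i hi => by rw [Function.update_of_ne (Finset.ne_of_mem_erase hi)]

lemma s15hDA_sum {n : ℕ} (x : Fin n → ℝ) (j : Fin n) (f : Fin n → ℝ → ℝ) (d a : ℝ)
    (hf : HasDerivAt (f j) d a) :
    HasDerivAt (fun t => ∑ i, f i (Function.update x j t i)) d a := by
  have he : (fun t => ∑ i, f i (Function.update x j t i))
      = fun t => f j t + ∑ i ∈ Finset.univ.erase j, f i (x i) :=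
    funext fun t => s15sum_upd x j f t
  rw [he]; exact hf.add_const _

lemma s15hDA_Y {n : ℕ} (y : Fin n → ℝ) (k : Fin n) (a : ℝ) :
    HasDerivAt (fun t => s15Y (Function.update y k t)) (2 * a) a :=
  s15hDA_sum y k (fun _ s => s ^ 2) _ a (by simpa using hasDerivAt_pow 2 a)

lemma s15hDA_ipL {n : ℕ} (x y : Fin n → ℝ) (j : Fin n) (a : ℝ) :
    HasDerivAt (fun t => s15ip (Function.update x j t) y) (y j) a :=
  s15hDA_sum x j (fun i s => s * y i) _ a (by simpa using (hasDerivAt_id a).mul_const (y j))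

lemma s15hDA_ipR {n : ℕ} (x y : Fin n → ℝ) (k : Fin n) (a : ℝ) :
    HasDerivAt (fun t => s15ip x (Function.update y k t)) (x k) a :=
  s15hDA_sum y k (fun i s => x i * s) _ a (by simpa using (hasDerivAt_id a).const_mul (x k))

lemma s15hDA_c {n : ℕ} (c' y : Fin n → ℝ) (k : Fin n) (a : ℝ) :
    HasDerivAt (fun t => s15c c' (Function.update y k t)) (c' k) a :=
  s15hDA_sum y k (fun i s => c' i * s) _ a (by simpa using (hasDerivAt_id a).const_mul (c' k))

lemma s15hDA_h {n : ℕ} (lam : ℝ) (c' : Fin n → ℝ) (c : ℝ) (x : Fin n → ℝ) (j : Fin n) (a : ℝ) :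
    HasDerivAt (fun t => s15h lam c' c (Function.update x j t)) (2 * lam * a + c' j) a := by
  have := (((s15hDA_Y x j a).const_mul lam).add (s15hDA_c c' x j a)).add_const c
  refine this.congr_deriv ?_
  ring

lemma s15hDA_Qx {n : ℕ} (lam : ℝ) (c' : Fin n → ℝ) (x y : Fin n → ℝ) (j : Fin n) (a : ℝ) :
    HasDerivAt (fun t => s15Q lam c' (Function.update x j t) y) (2 * lam * y j) a := by
  exact ((s15hDA_ipL x y j a).const_mul (2 * lam)).add_const (s15c c' y)

lemma s15hDA_Qy {n : ℕ} (lam : ℝ) (c' : Fin n → ℝ) (x y : Fin n → ℝ) (k : Fin n) (a : ℝ) :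
    HasDerivAt (fun t => s15Q lam c' x (Function.update y k t)) (2 * lam * x k + c' k) a := by
  exact ((s15hDA_ipR x y k a).const_mul (2 * lam)).add (s15hDA_c c' y k a)

lemma s15hDA_Rx {n : ℕ} (lam : ℝ) (c' : Fin n → ℝ) (c : ℝ) (x y : Fin n → ℝ) (j : Fin n) (a : ℝ) :
    HasDerivAt (fun t => s15R lam c' c (Function.update x j t) y)
      (4 * lam * (2 * lam * a + c' j) * s15Y y
        - 2 * (s15Q lam c' (Function.update x j a) y) * (2 * lam * y j)) a := by
  have h1 := ((s15hDA_h lam c' c x j a).const_mul (4 * lam)).mul_const (s15Y y)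
  have h2 := (s15hDA_Qx lam c' x y j a).pow 2
  have := h1.sub h2
  refine this.congr_deriv ?_
  push_cast; ring

lemma s15hDA_Ry {n : ℕ} (lam : ℝ) (c' : Fin n → ℝ) (c : ℝ) (x y : Fin n → ℝ) (k : Fin n) (a : ℝ) :
    HasDerivAt (fun t => s15R lam c' c x (Function.update y k t))
      (4 * lam * s15h lam c' c x * (2 * a)
        - 2 * (s15Q lam c' x (Function.update y k a)) * (2 * lam * x k + c' k)) a := by
  have h1 := (s15hDA_Y y k a).const_mul (4 * lam * s15h lam c' c x)
  have h2 := (s15hDA_Qy lam c' x y k a).pow 2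
  have := h1.sub h2
  refine this.congr_deriv ?_
  push_cast; ring

lemma s15cont_Ry {n : ℕ} (lam : ℝ) (c' : Fin n → ℝ) (c : ℝ) (x y : Fin n → ℝ) (k : Fin n) :
    Continuous (fun t => s15R lam c' c x (Function.update y k t)) :=
  continuous_iff_continuousAt.2 fun a => (s15hDA_Ry lam c' c x y k a).differentiableAt.continuousAt

noncomputable def s15G {n : ℕ} (lam : ℝ) (c' : Fin n → ℝ) (c : ℝ) (x y : Fin n → ℝ) (j : Fin n) : ℝ :=
  ((2 * lam * s15H lam c' x j * s15Y y - 2 * lam * s15Q lam c' x y * y j)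
      / Real.sqrt (s15R lam c' c x y) * s15h lam c' c x
    - Real.sqrt (s15R lam c' c x y) * s15H lam c' x j) / (2 * (s15h lam c' c x) ^ 2)

def s15Ry {n : ℕ} (lam : ℝ) (c' : Fin n → ℝ) (c : ℝ) (x y : Fin n → ℝ) (k : Fin n) : ℝ :=
  4 * lam * s15h lam c' c x * (2 * y k) - 2 * s15Q lam c' x y * (2 * lam * x k + c' k)

noncomputable def s15al {n : ℕ} (lam : ℝ) (c' : Fin n → ℝ) (c : ℝ) (x y : Fin n → ℝ) (k : Fin n) : ℝ :=
  (4 * lam * y k) / (2 * s15h lam c' c x * Real.sqrt (s15R lam c' c x y))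
    - (2 * lam * s15Y y * s15Ry lam c' c x y k)
        / (4 * s15h lam c' c x * Real.sqrt (s15R lam c' c x y) ^ 3)
    - s15Ry lam c' c x y k / (4 * (s15h lam c' c x) ^ 2 * Real.sqrt (s15R lam c' c x y))

noncomputable def s15be {n : ℕ} (lam : ℝ) (c' : Fin n → ℝ) (c : ℝ) (x y : Fin n → ℝ) (k : Fin n) : ℝ :=
  -(2 * lam * s15H lam c' x k) / (2 * s15h lam c' c x * Real.sqrt (s15R lam c' c x y))
    + (2 * lam * s15Q lam c' x y * s15Ry lam c' c x y k)
        / (4 * s15h lam c' c x * Real.sqrt (s15R lam c' c x y) ^ 3)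

noncomputable def s15ga {n : ℕ} (lam : ℝ) (c' : Fin n → ℝ) (c : ℝ) (x y : Fin n → ℝ) : ℝ :=
  -(2 * lam * s15Q lam c' x y) / (2 * s15h lam c' c x * Real.sqrt (s15R lam c' c x y))

noncomputable def s15E {n : ℕ} (lam : ℝ) (c' : Fin n → ℝ) (c : ℝ) (x y : Fin n → ℝ) (j k : Fin n) : ℝ :=
  s15al lam c' c x y k * s15H lam c' x j + s15be lam c' c x y k * y j
    + s15ga lam c' c x y * (if j = k then (1:ℝ) else 0)

noncomputable def s15A {n : ℕ} (lam : ℝ) (c' : Fin n → ℝ) (c : ℝ) (x y : Fin n → ℝ) : ℝ :=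
  (2 * lam * s15Y y / Real.sqrt (s15R lam c' c x y) * s15h lam c' c x
      - Real.sqrt (s15R lam c' c x y)) / (2 * (s15h lam c' c x) ^ 2)

noncomputable def s15B {n : ℕ} (lam : ℝ) (c' : Fin n → ℝ) (c : ℝ) (x y : Fin n → ℝ) : ℝ :=
  -(2 * lam * s15Q lam c' x y / Real.sqrt (s15R lam c' c x y) * s15h lam c' c x)
    / (2 * (s15h lam c' c x) ^ 2)

lemma s15hDA_F_x {n : ℕ} (lam : ℝ) (c' : Fin n → ℝ) (c : ℝ) (x y : Fin n → ℝ) (j : Fin n)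
    (hx : 0 < s15h lam c' c x) (hR : 0 < s15R lam c' c x y) :
    HasDerivAt (fun t => Real.sqrt (s15R lam c' c (Function.update x j t) y)
        / (2 * s15h lam c' c (Function.update x j t))) (s15G lam c' c x y j) (x j) := by
  have hs0 : Real.sqrt (s15R lam c' c x y) ≠ 0 := (Real.sqrt_pos.2 hR).ne'
  have hRx := s15hDA_Rx lam c' c x y j (x j)
  simp only [Function.update_eq_self] at hRx
  have h1 : HasDerivAt Real.sqrt (1 / (2 * Real.sqrt (s15R lam c' c x y)))
      ((fun t => s15R lam c' c (Function.update x j t) y) (x j)) := by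
    simpa [Function.update_eq_self] using Real.hasDerivAt_sqrt hR.ne'
  have hsq := h1.comp (x j) hRx
  rw [Function.comp_def] at hsq
  have hden := (s15hDA_h lam c' c x j (x j)).const_mul 2
  have hne : (fun t => 2 * s15h lam c' c (Function.update x j t)) (x j) ≠ 0 := by
    simp only [Function.update_eq_self]
    positivity
  have := hsq.div hden hne
  simp only [Function.update_eq_self] at this
  refine this.congr_deriv ?_
  unfold s15G s15H
  field_simp
  ring

lemma s15hDA_G_y {n : ℕ} (lam : ℝ) (c' : Fin n → ℝ) (c : ℝ) (x y : Fin n → ℝ) (j k : Fin n)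
    (hx : 0 < s15h lam c' c x) (hR : 0 < s15R lam c' c x y) :
    HasDerivAt (fun t => s15G lam c' c x (Function.update y k t) j)
      (s15E lam c' c x y j k) (y k) := by
  have hs0 : Real.sqrt (s15R lam c' c x y) ≠ 0 := (Real.sqrt_pos.2 hR).ne'
  have hyj : HasDerivAt (fun t => Function.update y k t j) (if j = k then (1:ℝ) else 0) (y k) := by
    by_cases hjk : j = k
    · subst hjk
      simp only [Function.update_self, if_pos rfl]
      exact hasDerivAt_id' _
    · have he : (fun t => Function.update y k t j) = fun _ => y j :=
        funext fun t => Function.update_of_ne hjk _ _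
      rw [he, if_neg hjk]
      exact hasDerivAt_const _ _
  have hY := s15hDA_Y y k (y k)
  have hQ := s15hDA_Qy lam c' x y k (y k)
  have hRy := s15hDA_Ry lam c' c x y k (y k)
  simp only [Function.update_eq_self] at hRy
  have h1 : HasDerivAt Real.sqrt (1 / (2 * Real.sqrt (s15R lam c' c x y)))
      ((fun t => s15R lam c' c x (Function.update y k t)) (y k)) := by
    simpa [Function.update_eq_self] using Real.hasDerivAt_sqrt hR.ne'
  have hsq := h1.comp (y k) hRy
  rw [Function.comp_def] at hsq
  have hnum := ((hY.const_mul (2 * lam * s15H lam c' x j)).sub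
      ((hQ.const_mul (2 * lam)).mul hyj))
  have hsne : (fun t => Real.sqrt (s15R lam c' c x (Function.update y k t))) (y k) ≠ 0 := by
    simpa [Function.update_eq_self] using hs0
  have hdiv := hnum.div hsq hsne
  have hall := ((hdiv.mul_const (s15h lam c' c x)).sub
      (hsq.mul_const (s15H lam c' x j))).div_const (2 * (s15h lam c' c x) ^ 2)
  simp only [Function.update_eq_self, Pi.sub_apply, Pi.mul_apply] at hall
  refine hall.congr_deriv ?_
  unfold s15E s15al s15be s15ga s15Ry s15H
  set s := Real.sqrt (s15R lam c' c x y) with hsdef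
  split_ifs with hjk <;> field_simp <;> ring

/-- The special family (`c_{ij} = λ δ_{ij}`) satisfies Hamel's equations, hence is
projectively flat, with projective factor `P = -(2λ⟨x,y⟩+⟨c',y⟩)/(2h)`. -/
theorem stmt15 (n : ℕ) (hn : 1 ≤ n) (lam : ℝ) (hlam : 0 < lam) (c' : Fin n → ℝ) (c : ℝ)
    (h : (Fin n → ℝ) → ℝ)
    (hh : ∀ x, h x = lam * (∑ i, (x i) ^ 2) + (∑ k, c' k * x k) + c)
    (F : (Fin n → ℝ) → (Fin n → ℝ) → ℝ)
    (hF : ∀ x y, F x y =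
      Real.sqrt (4 * lam * h x * (∑ i, (y i) ^ 2)
          - 4 * lam ^ 2 * (∑ i, x i * y i) ^ 2
          - 4 * lam * (∑ k, c' k * y k) * (∑ i, x i * y i)
          - (∑ k, c' k * y k) ^ 2) / (2 * h x)) :
    ∀ x y : Fin n → ℝ, h x > 0 →
      0 < 4 * lam * h x * (∑ i, (y i) ^ 2)
          - 4 * lam ^ 2 * (∑ i, x i * y i) ^ 2
          - 4 * lam * (∑ k, c' k * y k) * (∑ i, x i * y i)
          - (∑ k, c' k * y k) ^ 2 →
      (∀ k, (∑ j, y j * pdy k (fun x' y' => pdx j F x' y') x y) = pdx k F x y) ∧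
      (∑ k, y k * pdx k F x y) / (2 * F x y) =
        -(2 * lam * (∑ i, x i * y i) + ∑ k, c' k * y k) / (2 * h x) := by
  intro x y hxpos hradpos
  have hh' : ∀ z, h z = s15h lam c' c z := fun z => by rw [hh]; rfl
  have hx : 0 < s15h lam c' c x := by rw [← hh']; exact hxpos
  have hRid : ∀ z w : Fin n → ℝ,
      4 * lam * h z * (∑ i, (w i) ^ 2) - 4 * lam ^ 2 * (∑ i, z i * w i) ^ 2
        - 4 * lam * (∑ k, c' k * w k) * (∑ i, z i * w i) - (∑ k, c' k * w k) ^ 2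
      = s15R lam c' c z w := fun z w => by
    rw [hh]; unfold s15R s15Q s15h s15Y s15ip s15c; ring
  have hR : 0 < s15R lam c' c x y := by rw [← hRid x y]; exact hradpos
  have hs0 : Real.sqrt (s15R lam c' c x y) ≠ 0 := (Real.sqrt_pos.2 hR).ne'
  have hFeq : ∀ z w, F z w = Real.sqrt (s15R lam c' c z w) / (2 * s15h lam c' c z) :=
    fun z w => by rw [hF, hRid z w, hh']
  have hpdx : ∀ (y' : Fin n → ℝ), 0 < s15R lam c' c x y' →
      ∀ j, pdx j F x y' = s15G lam c' c x y' j := by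
    intro y' hR' j
    unfold pdx
    have he : (fun t => F (Function.update x j t) y')
        = fun t => Real.sqrt (s15R lam c' c (Function.update x j t) y')
            / (2 * s15h lam c' c (Function.update x j t)) := funext fun t => hFeq _ _
    rw [he]
    exact (s15hDA_F_x lam c' c x y' j hx hR').deriv
  have hpdy : ∀ j k, pdy k (fun x' y' => pdx j F x' y') x y = s15E lam c' c x y j k := by
    intro j k
    unfold pdy
    have hopen : IsOpen {t : ℝ | 0 < s15R lam c' c x (Function.update y k t)} :=
      isOpen_lt continuous_const (s15cont_Ry lam c' c x y k)
    have hmem : y k ∈ {t : ℝ | 0 < s15R lam c' c x (Function.update y k t)} := by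
      simpa [Function.update_eq_self] using hR
    have hev : (fun t => pdx j F x (Function.update y k t))
        =ᶠ[nhds (y k)] (fun t => s15G lam c' c x (Function.update y k t) j) := by
      filter_upwards [hopen.mem_nhds hmem] with t ht
      exact hpdx _ ht j
    rw [hev.deriv_eq]
    exact (s15hDA_G_y lam c' c x y j k hx hR).deriv
  have hQsum : (∑ j, y j * (2 * lam * x j + c' j)) = s15Q lam c' x y := by
    unfold s15Q s15ip s15c
    rw [Finset.mul_sum, ← Finset.sum_add_distrib]
    exact Finset.sum_congr rfl fun i _ => by ring
  have hYsum : (∑ j, y j * y j) = s15Y y := by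
    unfold s15Y
    exact Finset.sum_congr rfl fun i _ => by ring
  have hIsum : ∀ k, (∑ j, y j * (if j = k then (1:ℝ) else 0)) = y k := fun k => by
    simp [mul_ite]
  have hs2 : Real.sqrt (s15R lam c' c x y) ^ 2 = s15R lam c' c x y := Real.sq_sqrt hR.le
  have hYv : s15Y y = (Real.sqrt (s15R lam c' c x y) ^ 2 + (s15Q lam c' x y) ^ 2)
      / (4 * lam * s15h lam c' c x) := by
    rw [hs2]
    unfold s15R
    field_simp
    ring
  constructor
  · intro k
    have hrw : (∑ j, y j * pdy k (fun x' y' => pdx j F x' y') x y)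
        = ∑ j, y j * s15E lam c' c x y j k :=
      Finset.sum_congr rfl fun j _ => by rw [hpdy j k]
    have hEsum : (∑ j, y j * s15E lam c' c x y j k)
        = s15al lam c' c x y k * s15Q lam c' x y + s15be lam c' c x y k * s15Y y
          + s15ga lam c' c x y * y k := by
      rw [← hQsum, ← hYsum, ← hIsum k, Finset.mul_sum, Finset.mul_sum, Finset.mul_sum,
        ← Finset.sum_add_distrib, ← Finset.sum_add_distrib]
      exact Finset.sum_congr rfl fun i _ => by unfold s15E s15H; ring
    rw [hrw, hpdx y hR k, hEsum]
    unfold s15al s15be s15ga s15G s15Ry s15H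
    set s := Real.sqrt (s15R lam c' c x y) with hsdef
    rw [hYv]
    field_simp
    ring
  · have hGdecomp : ∀ k, s15G lam c' c x y k
        = s15A lam c' c x y * (2 * lam * x k + c' k) + s15B lam c' c x y * y k := by
      intro k
      unfold s15G s15A s15B s15H
      have hss : Real.sqrt (s15R lam c' c x y) * Real.sqrt (s15R lam c' c x y)
          = s15R lam c' c x y := Real.mul_self_sqrt hR.le
      field_simp
      linear_combination
    have hrw : (∑ k, y k * pdx k F x y) = ∑ k, y k * s15G lam c' c x y k :=
      Finset.sum_congr rfl fun k _ => by rw [hpdx y hR k]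
    have hGsum : (∑ k, y k * s15G lam c' c x y k)
        = s15A lam c' c x y * s15Q lam c' x y + s15B lam c' c x y * s15Y y := by
      rw [← hQsum, ← hYsum, Finset.mul_sum, Finset.mul_sum, ← Finset.sum_add_distrib]
      exact Finset.sum_congr rfl fun k _ => by rw [hGdecomp k]; ring
    rw [hrw, hGsum, hFeq x y, hh' x]
    unfold s15A s15B s15Q s15ip s15c
    set s := Real.sqrt (s15R lam c' c x y) with hsdef
    field_simp
    ring
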